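/- Let n ≡ 0 (mod 4) and let C ⊆ {1,…,n−1} be skew-symmetric (a ∈ C implies n−a ∉ C). Then i·∑_{k∈C}(w^{jk} − w^{−jk}) ∈ ℤ for all j (where w = e^{2πi/n}) if and only if C = ⋃_{d∈𝒟} S_n(d) for some set 𝒟 of divisors of n/4, where each S_n(d) is either G_n^1(d) or G_n^3(d). -/

import Mathlib

open Finset Polynomial

/-- `G_n^r(d) = {dk : k ≡ r (mod 4), gcd(dk, n) = d}` (as a subset of `{1,…,n-1}`). -/
def Grset (n d r : ℕ) : Finset ℕ :=
  (Finset.range n).filter (fun m => d ∣ m ∧ (m / d) % 4 = r ∧ Nat.gcd m n = d)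

set_option linter.unusedSectionVars false
set_option maxHeartbeats 1000000

noncomputable section NT16

/-- sign character mod 4 -/
def chi4 (m : ℕ) : ℤ := if m % 4 = 1 then 1 else -1

lemma chi4_mul_self {m : ℕ} : chi4 m * chi4 m = 1 := by
  unfold chi4; split <;> norm_num

lemma chi4_cast_mul_self {R : Type} [Ring R] (m : ℕ) :
    ((chi4 m : ℤ) : R) * ((chi4 m : ℤ) : R) = 1 := by
  have h := chi4_mul_self (m := m)
  have : (((chi4 m * chi4 m : ℤ)) : R) = ((1 : ℤ) : R) := by rw [h]
  push_cast at this
  simpa using this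

lemma chi4_eq_of_modeq {a b : ℕ} (h : a % 4 = b % 4) : chi4 a = chi4 b := by
  unfold chi4; rw [h]

lemma chi4_inv {a b : ℕ} (ha : a % 2 = 1) (hb : b % 2 = 1) (h : (a * b) % 4 = 1) :
    chi4 a = chi4 b := by
  rw [Nat.mul_mod] at h
  have h1 : a % 4 = 1 ∨ a % 4 = 3 := by omega
  have h2 : b % 4 = 1 ∨ b % 4 = 3 := by omega
  rcases h1 with h1 | h1 <;> rcases h2 with h2 | h2 <;>
    rw [h1, h2] at h <;> simp [chi4, h1, h2] <;> norm_num at h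

section PureA
variable {n : ℕ} [NeZero n] {K : Type} [Field K] {ζ : K}

variable {ζ : K}

lemma pow_val_natCast (hζ : IsPrimitiveRoot ζ n) (m : ℕ) :
    ζ ^ ((m : ZMod n)).val = ζ ^ m := by
  rw [ZMod.val_natCast]
  conv_rhs => rw [← Nat.div_add_mod m n, pow_add, pow_mul, hζ.pow_eq_one, one_pow, one_mul]

lemma pow_val_mul (hζ : IsPrimitiveRoot ζ n) (x y : ZMod n) :
    ζ ^ x.val * ζ ^ y.val = ζ ^ (x + y).val := by
  rw [← pow_add]
  have h : ((x.val + y.val : ℕ) : ZMod n) = x + y := by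
    push_cast [ZMod.natCast_val, ZMod.cast_id]; ring
  rw [← pow_val_natCast hζ (x.val + y.val), h]

lemma pow_val_zmod_mul (hζ : IsPrimitiveRoot ζ n) (m : ℕ) (x : ZMod n) :
    ζ ^ (m * x.val) = ζ ^ (((m : ZMod n) * x).val) := by
  have h : ((m * x.val : ℕ) : ZMod n) = (m : ZMod n) * x := by
    push_cast [ZMod.natCast_val, ZMod.cast_id]; ring
  rw [← pow_val_natCast hζ (m * x.val), h]

/-- orthogonality -/
lemma orth_sum (hζ : IsPrimitiveRoot ζ n) (m : ZMod n) :
    ∑ j : ZMod n, ζ ^ (j * m).val = if m = 0 then (n : K) else 0 := by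
  have hterm : ∀ j : ZMod n, ζ ^ (j * m).val = (ζ ^ m.val) ^ j.val := by
    intro j
    rw [← pow_mul, mul_comm m.val j.val, pow_val_zmod_mul hζ, ZMod.natCast_val, ZMod.cast_id]
  rw [Finset.sum_congr rfl (fun j _ => hterm j)]
  have hsum : ∑ j : ZMod n, (ζ ^ m.val) ^ j.val
      = ∑ i ∈ Finset.range n, (ζ ^ m.val) ^ i := by
    refine Finset.sum_nbij' (fun j => j.val) (fun i => (i : ZMod n)) ?_ ?_ ?_ ?_ ?_
    · intro a _; exact Finset.mem_range.mpr (ZMod.val_lt a)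
    · intro a _; exact Finset.mem_univ _
    · intro a _; simp [ZMod.natCast_val, ZMod.cast_id]
    · intro a ha; exact ZMod.val_cast_of_lt (Finset.mem_range.mp ha)
    · intro a _; rfl
  rw [hsum]
  by_cases hm : m = 0
  · subst hm; simp
  · rw [if_neg hm]
    have hne : ζ ^ m.val ≠ 1 := by
      intro h
      have hdvd := (hζ.pow_eq_one_iff_dvd m.val).mp h
      have hlt := ZMod.val_lt m
      have : m.val = 0 := by
        rcases Nat.eq_zero_or_pos m.val with h0 | h0
        · exact h0
        · exact absurd (Nat.le_of_dvd h0 hdvd) (not_le.mpr hlt)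
      exact hm ((ZMod.val_eq_zero m).mp this)
    have hgeom := geom_sum_mul (ζ ^ m.val) n
    have hpow : (ζ ^ m.val) ^ n = 1 := by
      rw [← pow_mul, mul_comm, pow_mul, hζ.pow_eq_one, one_pow]
    rw [hpow, sub_self] at hgeom
    rcases mul_eq_zero.mp hgeom with h | h
    · exact h
    · exact absurd (sub_eq_zero.mp h) hne



lemma Isq (h4 : 4 ∣ n) (hζ : IsPrimitiveRoot ζ n) :
    (ζ ^ (n/4)) ^ 2 = -1 := by
  have hn4 : n % 4 = 0 := Nat.eq_zero_of_dvd_of_lt h4 |> fun _ => Nat.mod_eq_zero_of_dvd h4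
  have h2 : n/4 * 2 = n/2 := by omega
  rw [← pow_mul, h2]
  have hsq : (ζ ^ (n/2)) * (ζ ^ (n/2)) = 1 := by
    rw [← pow_add]
    have h : n/2 + n/2 = n := by omega
    rw [h, hζ.pow_eq_one]
  rcases mul_self_eq_one_iff.mp hsq with h | h
  · exfalso
    have hlt : n/2 < n := by have := Nat.pos_of_ne_zero (NeZero.ne n); omega
    have hdvd := (hζ.pow_eq_one_iff_dvd _).mp h
    have hpos : 0 < n/2 := by have := Nat.pos_of_ne_zero (NeZero.ne n); omega
    exact absurd (Nat.le_of_dvd hpos hdvd) (not_le.mpr hlt)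
  · exact h

lemma Ipow_odd (h4 : 4 ∣ n) (hζ : IsPrimitiveRoot ζ n) {m : ℕ} (hm : m % 2 = 1) :
    (ζ ^ (n/4)) ^ m = (chi4 m : K) * ζ ^ (n/4) := by
  set I := ζ ^ (n/4) with hI
  have hI2 : I ^ 2 = -1 := Isq h4 hζ
  have hI4 : I ^ 4 = 1 := by
    have h : (4:ℕ) = 2 * 2 := rfl
    rw [h, pow_mul, hI2]; ring
  have key : I ^ m = I ^ (m % 4) := by
    conv_lhs => rw [← Nat.div_add_mod m 4, pow_add, pow_mul, hI4, one_pow, one_mul]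
  rw [key]
  have h : m % 4 = 1 ∨ m % 4 = 3 := by omega
  rcases h with h | h
  · rw [h]; simp [chi4, h]
  · rw [h]
    have h3 : I ^ 3 = I ^ 2 * I := by ring
    rw [h3, hI2]
    simp [chi4, h]


lemma unit_val_odd (h4 : 4 ∣ n) (s : (ZMod n)ˣ) :
    ((s : ZMod n)).val % 2 = 1 := by
  have hcop := ZMod.val_coe_unit_coprime s
  rcases Nat.even_or_odd ((s : ZMod n)).val with he | ho
  · exfalso
    have h2 : (2:ℕ) ∣ Nat.gcd ((s : ZMod n)).val n :=
      Nat.dvd_gcd he.two_dvd (dvd_trans (by norm_num) h4)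
    rw [Nat.Coprime] at hcop
    rw [hcop] at h2
    norm_num at h2
  · rcases ho with ⟨k, hk⟩; omega

lemma unit_mul_inv_mod4 (h4 : 4 ∣ n) (s : (ZMod n)ˣ) :
    (((s : ZMod n)).val * (((s⁻¹ : (ZMod n)ˣ) : ZMod n)).val) % 4 = 1 := by
  have h1 : (s : ZMod n) * ((s⁻¹ : (ZMod n)ˣ) : ZMod n) = 1 := by
    rw [← Units.val_mul, mul_inv_cancel]; rfl
  have h2 : ((((s : ZMod n)).val * (((s⁻¹ : (ZMod n)ˣ) : ZMod n)).val : ℕ) : ZMod n)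
      = ((1 : ℕ) : ZMod n) := by
    push_cast [ZMod.natCast_val, ZMod.cast_id]
    rw [h1]
  have h3 := (ZMod.natCast_eq_natCast_iff _ _ _).mp h2
  have h4' := Nat.ModEq.of_dvd h4 h3
  have hn4 : 1 % 4 = 1 := by norm_num
  unfold Nat.ModEq at h4'
  omega

lemma chi4_unit_inv (h4 : 4 ∣ n) (s : (ZMod n)ˣ) :
    chi4 ((((s⁻¹ : (ZMod n)ˣ) : ZMod n)).val) = chi4 (((s : ZMod n)).val) :=
  chi4_inv (unit_val_odd h4 s⁻¹) (unit_val_odd h4 s)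
    (by rw [mul_comm]; exact unit_mul_inv_mod4 h4 s)

/-- the basic exponential sum -/
def Wsum (ζ : K) (g : ZMod n → ℤ) (j : ZMod n) : K :=
  ∑ a : ZMod n, (g a : K) * ζ ^ ((j * a)).val

lemma Wsum_mul_unit (hζ : IsPrimitiveRoot ζ n) (g : ZMod n → ℤ)
    (t : (ZMod n)ˣ) (j : ZMod n) :
    Wsum ζ g ((t : ZMod n) * j)
      = ∑ b : ZMod n, (g (((t⁻¹ : (ZMod n)ˣ) : ZMod n) * b) : K) * ζ ^ ((j * b)).val := by
  unfold Wsum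
  refine Fintype.sum_bijective (fun a => (t : ZMod n) * a)
    (MulAction.bijective t) _ _ ?_
  intro a
  have e1 : ((t⁻¹ : (ZMod n)ˣ) : ZMod n) * ((t : ZMod n) * a) = a := by
    rw [← mul_assoc, ← Units.val_mul, inv_mul_cancel, Units.val_one, one_mul]
  have e2 : j * ((t : ZMod n) * a) = ((t : ZMod n) * j) * a := by ring
  show (g a : K) * ζ ^ ((((t : ZMod n) * j) * a)).val
      = (g (((t⁻¹ : (ZMod n)ˣ) : ZMod n) * ((t : ZMod n) * a)) : K) *
        ζ ^ ((j * ((t : ZMod n) * a))).val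
  rw [e1, e2]

lemma Wsum_rel_of_rel (hζ : IsPrimitiveRoot ζ n) (h4 : 4 ∣ n)
    (g : ZMod n → ℤ)
    (hrel : ∀ (s : (ZMod n)ˣ) (a : ZMod n),
      g ((s : ZMod n) * a) = chi4 (((s : ZMod n)).val) * g a)
    (t : (ZMod n)ˣ) (j : ZMod n) :
    Wsum ζ g ((t : ZMod n) * j) = (chi4 ((t : ZMod n).val) : K) * Wsum ζ g j := by
  rw [Wsum_mul_unit hζ g t j]
  have hterm : ∀ b : ZMod n,
      (g (((t⁻¹ : (ZMod n)ˣ) : ZMod n) * b) : K) * ζ ^ ((j * b)).val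
        = (chi4 ((t : ZMod n).val) : K) * ((g b : K) * ζ ^ ((j * b)).val) := by
    intro b
    rw [hrel t⁻¹ b, ← chi4_unit_inv h4 t]
    push_cast
    ring
  rw [Finset.sum_congr rfl (fun b _ => hterm b), ← Finset.mul_sum]
  rfl

lemma Wsum_inversion (hζ : IsPrimitiveRoot ζ n) (g : ZMod n → ℤ) (b : ZMod n) :
    ((n : K)) * (g b : K) = ∑ j : ZMod n, Wsum ζ g j * ζ ^ ((j * (-b))).val := by
  unfold Wsum
  have h1 : ∀ j : ZMod n,
      (∑ a : ZMod n, (g a : K) * ζ ^ ((j * a)).val) * ζ ^ ((j * (-b))).val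
        = ∑ a : ZMod n, (g a : K) * ζ ^ ((j * (a - b))).val := by
    intro j
    rw [Finset.sum_mul]
    refine Finset.sum_congr rfl (fun a _ => ?_)
    rw [mul_assoc, pow_val_mul hζ]
    congr 2
    ring
  rw [Finset.sum_congr rfl (fun j _ => h1 j), Finset.sum_comm]
  have h2 : ∀ a : ZMod n,
      ∑ j : ZMod n, (g a : K) * ζ ^ ((j * (a - b))).val
        = (g a : K) * (if a - b = 0 then (n : K) else 0) := by
    intro a
    rw [← Finset.mul_sum, orth_sum hζ]
  rw [Finset.sum_congr rfl (fun a _ => h2 a)]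
  have h4' : ∀ a : ZMod n, (g a : K) * (if a - b = 0 then (n:K) else 0)
      = if a = b then (g a : K) * (n:K) else 0 := by
    intro a
    by_cases hab : a = b
    · subst hab; simp
    · rw [if_neg (by simpa [sub_eq_zero] using hab), mul_zero, if_neg hab]
  rw [Finset.sum_congr rfl (fun a _ => h4' a), Finset.sum_ite_eq' Finset.univ b
    (fun a => (g a : K) * (n : K))]
  simp [mul_comm]


end PureA

section CycA
variable {n : ℕ+} {K : Type} [Field K] [Algebra ℚ K] [IsCyclotomicExtension {(n:ℕ)} ℚ K] {ζ : K}

variable [Algebra ℚ K] [IsCyclotomicExtension {(n:ℕ)} ℚ K]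

lemma aut_pow_exists (hζ : IsPrimitiveRoot ζ (n : ℕ)) (σ : K ≃ₐ[ℚ] K) :
    ∃ t : (ZMod (n:ℕ))ˣ, σ ζ = ζ ^ ((t : ZMod (n:ℕ))).val := by
  haveI : NeZero (n:ℕ) := ⟨n.pos.ne'⟩
  exact ⟨(hζ.autToPow ℚ) σ, (hζ.autToPow_spec ℚ σ).symm⟩

lemma exists_aut (hζ : IsPrimitiveRoot ζ (n : ℕ)) (t : (ZMod (n:ℕ))ˣ) :
    ∃ σ : K ≃ₐ[ℚ] K, σ ζ = ζ ^ ((t : ZMod (n:ℕ))).val := by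
  haveI : NeZero (n:ℕ) := ⟨n.pos.ne'⟩
  have hirr : Irreducible (cyclotomic (n:ℕ) ℚ) := cyclotomic.irreducible_rat n.pos
  obtain ⟨σ, hσ⟩ := (IsCyclotomicExtension.autEquivPow K hirr).surjective t
  have hzeta := IsCyclotomicExtension.zeta_spec n ℚ K
  have hspec : σ (IsCyclotomicExtension.zeta n ℚ K)
      = (IsCyclotomicExtension.zeta n ℚ K) ^ ((t : ZMod (n:ℕ))).val := by
    have h := hzeta.autToPow_spec ℚ σ
    have he : (hzeta.autToPow ℚ) σ = t := by
      rw [← hσ]; rfl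
    rw [he] at h
    exact h.symm
  obtain ⟨c, _, hc⟩ := hzeta.eq_pow_of_pow_eq_one (hζ.pow_eq_one)
  refine ⟨σ, ?_⟩
  rw [← hc, map_pow, hspec, ← pow_mul, mul_comm, pow_mul]

omit [IsCyclotomicExtension {(n:ℕ)} ℚ K] in
lemma fixed_is_rat [IsCyclotomicExtension {(n:ℕ)} ℚ K] (x : K) (h : ∀ σ : K ≃ₐ[ℚ] K, σ x = x) :
    ∃ q : ℚ, algebraMap ℚ K q = x := by
  haveI := IsCyclotomicExtension.isGalois {(n:ℕ)} ℚ K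
  haveI : FiniteDimensional ℚ K := IsCyclotomicExtension.finiteDimensional {(n:ℕ)} ℚ K
  have ht : IntermediateField.fixedField (⊤ : Subgroup (K ≃ₐ[ℚ] K)) = ⊥ :=
    ((IsGalois.tfae (F := ℚ) (E := K)).out 0 1).mp (by infer_instance)
  have hb : x ∈ (⊥ : IntermediateField ℚ K) := by
    rw [← ht]; intro σ; exact h σ.1
  exact IntermediateField.mem_bot.mp hb

lemma rat_integral (x : K) (hx : IsIntegral ℤ x) {q : ℚ} (hq : algebraMap ℚ K q = x) :
    ∃ z : ℤ, x = (z : K) := by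
  have hqint : IsIntegral ℤ q := by
    rw [← isIntegral_algebraMap_iff (algebraMap ℚ K).injective]
    rwa [hq]
  obtain ⟨z, hz⟩ := IsIntegrallyClosed.isIntegral_iff.mp hqint
  refine ⟨z, ?_⟩
  rw [← hq, ← hz]
  simp [map_intCast]

lemma zeta_int (hζ : IsPrimitiveRoot ζ (n : ℕ)) : IsIntegral ℤ ζ := by
  refine ⟨X ^ (n:ℕ) - 1, monic_X_pow_sub_C 1 n.pos.ne', ?_⟩
  simp [hζ.pow_eq_one]

variable [Algebra ℚ K] [IsCyclotomicExtension {(n:ℕ)} ℚ K]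

lemma aut_Wsum (h4 : 4 ∣ (n:ℕ)) (hζ : IsPrimitiveRoot ζ (n : ℕ))
    (σ : K ≃ₐ[ℚ] K) (t : (ZMod (n:ℕ))ˣ) (hσt : σ ζ = ζ ^ ((t : ZMod (n:ℕ))).val)
    (g : ZMod (n:ℕ) → ℤ) (j : ZMod (n:ℕ)) :
    σ (ζ ^ ((n:ℕ)/4) * Wsum ζ g j)
      = (chi4 ((t : ZMod (n:ℕ)).val) : K) * (ζ ^ ((n:ℕ)/4) * Wsum ζ g ((t : ZMod (n:ℕ)) * j)) := by
  haveI : NeZero (n:ℕ) := ⟨n.pos.ne'⟩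
  have hodd := unit_val_odd h4 t
  unfold Wsum
  rw [map_mul, map_pow, hσt, map_sum]
  have hI : (ζ ^ (t : ZMod (n:ℕ)).val) ^ ((n:ℕ)/4)
      = (chi4 ((t : ZMod (n:ℕ)).val) : K) * ζ ^ ((n:ℕ)/4) := by
    rw [← pow_mul, mul_comm, pow_mul]
    exact Ipow_odd h4 hζ hodd
  rw [hI]
  have hterm : ∀ a : ZMod (n:ℕ),
      σ ((g a : K) * ζ ^ ((j * a)).val)
        = (g a : K) * ζ ^ ((((t : ZMod (n:ℕ)) * j) * a)).val := by
    intro a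
    rw [map_mul, map_intCast, map_pow, hσt, ← pow_mul, pow_val_zmod_mul hζ]
    congr 2
    rw [ZMod.natCast_val, ZMod.cast_id]
    ring
  rw [Finset.sum_congr rfl (fun a _ => hterm a)]
  ring

theorem core_equiv (h4 : 4 ∣ (n:ℕ)) (hζ : IsPrimitiveRoot ζ (n : ℕ)) (g : ZMod (n:ℕ) → ℤ) :
    (∀ j : ZMod (n:ℕ), ∃ z : ℤ, ζ ^ ((n:ℕ)/4) * Wsum ζ g j = (z : K)) ↔
    (∀ (s : (ZMod (n:ℕ))ˣ) (a : ZMod (n:ℕ)),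
      g ((s : ZMod (n:ℕ)) * a) = chi4 (((s : ZMod (n:ℕ))).val) * g a) := by
  haveI : NeZero (n:ℕ) := ⟨n.pos.ne'⟩
  haveI : CharZero K := charZero_of_injective_algebraMap (algebraMap ℚ K).injective
  have hIne : ζ ^ ((n:ℕ)/4) ≠ 0 := pow_ne_zero _ (hζ.ne_zero n.pos.ne')
  have hchicast : ∀ m : ℕ, (chi4 m : K) * (chi4 m : K) = 1 := by
    intro m
    have := chi4_mul_self (m := m)
    exact_mod_cast congrArg (fun z : ℤ => (z : K)) this
  constructor
  · intro hint
    -- step 1 : Wsum relation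
    have step1 : ∀ (t : (ZMod (n:ℕ))ˣ) (j : ZMod (n:ℕ)),
        Wsum ζ g ((t : ZMod (n:ℕ)) * j) = (chi4 ((t : ZMod (n:ℕ)).val) : K) * Wsum ζ g j := by
      intro t j
      obtain ⟨σ, hσ⟩ := exists_aut hζ t
      obtain ⟨z, hz⟩ := hint j
      have h1 := aut_Wsum h4 hζ σ t hσ g j
      rw [hz, map_intCast] at h1
      -- h1 : (z:K) = chi * (I * W (t j))
      have h5 : ζ ^ ((n:ℕ)/4) * Wsum ζ g ((t : ZMod (n:ℕ)) * j)
          = ζ ^ ((n:ℕ)/4) * ((chi4 ((t : ZMod (n:ℕ)).val) : K) * Wsum ζ g j) := by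
        calc ζ ^ ((n:ℕ)/4) * Wsum ζ g ((t : ZMod (n:ℕ)) * j)
            = ((chi4 ((t : ZMod (n:ℕ)).val) : K) * (chi4 ((t : ZMod (n:ℕ)).val) : K)) *
              (ζ ^ ((n:ℕ)/4) * Wsum ζ g ((t : ZMod (n:ℕ)) * j)) := by
              rw [chi4_cast_mul_self, one_mul]
          _ = (chi4 ((t : ZMod (n:ℕ)).val) : K) *
              ((chi4 ((t : ZMod (n:ℕ)).val) : K) * (ζ ^ ((n:ℕ)/4) *
                Wsum ζ g ((t : ZMod (n:ℕ)) * j))) := by ring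
          _ = (chi4 ((t : ZMod (n:ℕ)).val) : K) * (ζ ^ ((n:ℕ)/4) * Wsum ζ g j) := by
              rw [← h1, hz]
          _ = ζ ^ ((n:ℕ)/4) * ((chi4 ((t : ZMod (n:ℕ)).val) : K) * Wsum ζ g j) := by ring
      exact mul_left_cancel₀ hIne h5
    intro s a
    have hinv : ∀ b : ZMod (n:ℕ),
        (((n:ℕ) : K)) * (g b : K) = ∑ j : ZMod (n:ℕ), Wsum ζ g j * ζ ^ ((j * (-b))).val :=
      Wsum_inversion hζ g
    have key : (((n:ℕ) : K)) * (g ((s : ZMod (n:ℕ)) * a) : K)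
        = (chi4 (((s : ZMod (n:ℕ))).val) : K) * ((((n:ℕ) : K)) * (g a : K)) := by
      rw [hinv ((s : ZMod (n:ℕ)) * a)]
      have hre : ∑ j : ZMod (n:ℕ), Wsum ζ g j * ζ ^ ((j * (-((s : ZMod (n:ℕ)) * a)))).val
          = ∑ j : ZMod (n:ℕ),
              Wsum ζ g (((s⁻¹ : (ZMod (n:ℕ))ˣ) : ZMod (n:ℕ)) * j) *
                ζ ^ (((((s⁻¹ : (ZMod (n:ℕ))ˣ) : ZMod (n:ℕ)) * j) * (-((s : ZMod (n:ℕ)) * a)))).val := by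
        refine (Fintype.sum_bijective (fun j => ((s⁻¹ : (ZMod (n:ℕ))ˣ) : ZMod (n:ℕ)) * j)
          (MulAction.bijective (s⁻¹ : (ZMod (n:ℕ))ˣ)) _ _ ?_).symm
        intro j; rfl
      rw [hre]
      have hterm2 : ∀ j : ZMod (n:ℕ),
          Wsum ζ g (((s⁻¹ : (ZMod (n:ℕ))ˣ) : ZMod (n:ℕ)) * j) *
              ζ ^ (((((s⁻¹ : (ZMod (n:ℕ))ˣ) : ZMod (n:ℕ)) * j) * (-((s : ZMod (n:ℕ)) * a)))).val
            = (chi4 (((s : ZMod (n:ℕ))).val) : K) * (Wsum ζ g j * ζ ^ ((j * (-a))).val) := by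
        intro j
        have hW := step1 s⁻¹ j
        have hexp : (((s⁻¹ : (ZMod (n:ℕ))ˣ) : ZMod (n:ℕ)) * j) * (-((s : ZMod (n:ℕ)) * a))
            = j * (-a) := by
          have hss : ((s⁻¹ : (ZMod (n:ℕ))ˣ) : ZMod (n:ℕ)) * (s : ZMod (n:ℕ)) = 1 := by
            rw [← Units.val_mul, inv_mul_cancel]; rfl
          calc (((s⁻¹ : (ZMod (n:ℕ))ˣ) : ZMod (n:ℕ)) * j) * (-((s : ZMod (n:ℕ)) * a))
              = (((s⁻¹ : (ZMod (n:ℕ))ˣ) : ZMod (n:ℕ)) * (s : ZMod (n:ℕ))) * (j * (-a)) := by ring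
            _ = j * (-a) := by rw [hss, one_mul]
        rw [hW, hexp, chi4_unit_inv h4 s]
        ring
      rw [Finset.sum_congr rfl (fun j _ => hterm2 j), ← Finset.mul_sum, ← hinv a]
    have hne : (((n:ℕ) : K)) ≠ 0 := by
      exact_mod_cast Nat.cast_ne_zero.mpr n.pos.ne'
    have key2 : (g ((s : ZMod (n:ℕ)) * a) : K) = (chi4 (((s : ZMod (n:ℕ))).val) * g a : ℤ) := by
      push_cast
      apply mul_left_cancel₀ hne
      rw [key]; ring
    exact_mod_cast key2
  · intro hrel j
    have hfix : ∀ σ : K ≃ₐ[ℚ] K, σ (ζ ^ ((n:ℕ)/4) * Wsum ζ g j) = ζ ^ ((n:ℕ)/4) * Wsum ζ g j := by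
      intro σ
      obtain ⟨t, hσ⟩ := aut_pow_exists hζ σ
      rw [aut_Wsum h4 hζ σ t hσ g j, Wsum_rel_of_rel hζ h4 g hrel t j]
      have hcc := chi4_cast_mul_self (R := K) ((t : ZMod (n:ℕ)).val)
      linear_combination (ζ ^ ((n:ℕ)/4) * Wsum ζ g j) * hcc
    obtain ⟨q, hq⟩ := fixed_is_rat (n := n) (ζ ^ ((n:ℕ)/4) * Wsum ζ g j) hfix
    have hintg : IsIntegral ℤ (ζ ^ ((n:ℕ)/4) * Wsum ζ g j) := by
      have hz := zeta_int hζ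
      unfold Wsum
      rw [Finset.mul_sum]
      refine IsIntegral.sum _ (fun a _ => ?_)
      have h1 : ζ ^ ((n:ℕ)/4) * ((g a : K) * ζ ^ ((j * a)).val)
          = (g a : K) * (ζ ^ ((n:ℕ)/4) * ζ ^ ((j * a)).val) := by ring
      rw [h1]
      have h2 : IsIntegral ℤ ((g a : K)) := by
        have : ((g a : ℤ) : K) = algebraMap ℤ K (g a) := by simp
        rw [this]
        exact isIntegral_algebraMap
      exact h2.mul ((hz.pow _).mul (hz.pow _))
    obtain ⟨z, hzz⟩ := rat_integral _ hintg hq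
    exact ⟨z, hzz⟩


end CycA


def gfun (n : ℕ) (C : Finset ℕ) (a : ZMod n) : ℤ :=
  (if a.val ∈ C then 1 else 0) - (if (-a).val ∈ C then 1 else 0)

section Comb
variable {n : ℕ} {C : Finset ℕ}

lemma mem_Grset {d r m : ℕ} :
    m ∈ Grset n d r ↔ m < n ∧ d ∣ m ∧ (m / d) % 4 = r ∧ Nat.gcd m n = d := by
  unfold Grset
  simp [Finset.mem_filter, Finset.mem_range, and_assoc]

lemma gcd_mod_left (x : ℕ) : Nat.gcd (x % n) n = Nat.gcd x n := by
  rw [← Nat.gcd_rec, Nat.gcd_comm]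

lemma val_unit_mul_gcd (hn : 0 < n) (s : (ZMod n)ˣ) (a : ZMod n) :
    Nat.gcd (((s : ZMod n) * a).val) n = Nat.gcd a.val n := by
  haveI : NeZero n := ⟨hn.ne'⟩
  rw [ZMod.val_mul, gcd_mod_left,
    Nat.Coprime.gcd_mul_left_cancel _ (ZMod.val_coe_unit_coprime s)]

lemma div_modeq_aux {d x y : ℕ} (hd : 0 < d) (h4d : 4 * d ∣ n) (hx : d ∣ x) (hy : d ∣ y)
    (hxy : x ≡ y [MOD n]) (hle : y ≤ x) : x / d ≡ y / d [MOD 4] := by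
  obtain ⟨x', rfl⟩ := hx
  obtain ⟨y', rfl⟩ := hy
  have h1 : n ∣ d * x' - d * y' := (Nat.modEq_iff_dvd' hle).mp hxy.symm
  have hsub : d * x' - d * y' = d * (x' - y') := by
    rw [Nat.mul_sub]
  have h2 : 4 * d ∣ d * (x' - y') := hsub ▸ dvd_trans h4d h1
  have h3 : 4 ∣ x' - y' := by
    obtain ⟨c, hc⟩ := h2
    have : d * (x' - y') = d * (4 * c) := by rw [hc]; ring
    have := Nat.eq_of_mul_eq_mul_left hd this
    exact ⟨c, this⟩
  have hle' : y' ≤ x' := Nat.le_of_mul_le_mul_left hle hd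
  rw [Nat.mul_div_cancel_left _ hd, Nat.mul_div_cancel_left _ hd]
  exact ((Nat.modEq_iff_dvd' hle').mpr h3).symm

lemma div_modeq_four {d x y : ℕ} (hd : 0 < d) (h4d : 4 * d ∣ n) (hx : d ∣ x) (hy : d ∣ y)
    (hxy : x ≡ y [MOD n]) : x / d ≡ y / d [MOD 4] := by
  rcases le_total y x with h | h
  · exact div_modeq_aux hd h4d hx hy hxy h
  · exact (div_modeq_aux hd h4d hy hx hxy.symm h).symm

lemma unit_lift {m : ℕ} (hn : 0 < n) (hm : m ∣ n) (t : (ZMod m)ˣ) :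
    ∃ s : (ZMod n)ˣ, ((s : ZMod n)).val ≡ ((t : ZMod m)).val [MOD m] := by
  haveI : NeZero n := ⟨hn.ne'⟩
  have hm0 : 0 < m := Nat.pos_of_dvd_of_pos hm hn
  haveI : NeZero m := ⟨hm0.ne'⟩
  obtain ⟨s, hs⟩ := ZMod.unitsMap_surjective hm t
  refine ⟨s, ?_⟩
  have h2 : (ZMod.castHom hm (ZMod m)) ((s : ZMod n)) = (t : ZMod m) := by
    rw [ZMod.unitsMap_def] at hs
    have := congrArg (Units.val) hs
    simpa using this
  have h1 : ((((s : ZMod n)).val : ℕ) : ZMod m) = (((t : ZMod m)).val : ZMod m) := by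
    rw [ZMod.natCast_val, ZMod.natCast_val, ZMod.cast_id, ← ZMod.castHom_apply (h := hm), h2]
  exact (ZMod.natCast_eq_natCast_iff _ _ _).mp h1

lemma exists_unit_one_three (hn : 0 < n) (h4 : 4 ∣ n) {m : ℕ} (hm : m ∣ n) (hm4 : ¬ 4 ∣ m) :
    ∃ s : (ZMod n)ˣ, ((s : ZMod n)).val ≡ 1 [MOD m] ∧ ((s : ZMod n)).val % 4 = 3 := by
  have hm0 : 0 < m := Nat.pos_of_dvd_of_pos hm hn
  have hg2 : Nat.gcd m 4 ∣ 2 := by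
    have h1 : Nat.gcd m 4 ∣ 4 := Nat.gcd_dvd_right m 4
    have h2 : Nat.gcd m 4 ≠ 4 := fun h => hm4 (h ▸ Nat.gcd_dvd_left m 4)
    have h3 : Nat.gcd m 4 ≤ 4 := Nat.le_of_dvd (by norm_num) h1
    interval_cases h : Nat.gcd m 4 <;> revert h1 h2 <;> decide
  have hcons : (1 : ℕ) ≡ 3 [MOD Nat.gcd m 4] :=
    (Nat.modEq_iff_dvd' (by norm_num)).mpr (dvd_trans hg2 (by norm_num))
  obtain ⟨x, hx1, hx2⟩ := Nat.chineseRemainder' hcons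
  have hx4 : x % 4 = 3 := hx2
  have hxpos : 1 ≤ x := by omega
  have hcopm : Nat.Coprime x m := by
    have hdvd : m ∣ x - 1 := (Nat.modEq_iff_dvd' hxpos).mp hx1.symm
    have h1 : Nat.gcd x m ∣ x - (x - 1) :=
      Nat.dvd_sub (Nat.gcd_dvd_left x m) (dvd_trans (Nat.gcd_dvd_right x m) hdvd)
    have h2 : x - (x - 1) = 1 := by omega
    rw [h2] at h1
    exact Nat.dvd_one.mp h1
  have hcop2 : Nat.Coprime x 2 := by
    rw [Nat.coprime_comm]
    rw [Nat.Prime.coprime_iff_not_dvd Nat.prime_two]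
    omega
  have hcop4 : Nat.Coprime x 4 := by
    have : (4 : ℕ) = 2 ^ 2 := rfl
    rw [this]
    exact Nat.Coprime.pow_right _ hcop2
  have hL : Nat.lcm m 4 ∣ n := Nat.lcm_dvd hm h4
  have hL0 : 0 < Nat.lcm m 4 := Nat.pos_of_dvd_of_pos hL hn
  haveI : NeZero (Nat.lcm m 4) := ⟨hL0.ne'⟩
  have hcopL : Nat.Coprime x (Nat.lcm m 4) :=
    Nat.Coprime.coprime_dvd_right (Nat.lcm_dvd (dvd_mul_right m 4) (dvd_mul_left 4 m))
      (hcopm.mul_right hcop4)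
  obtain ⟨s, hs⟩ := unit_lift hn hL (ZMod.unitOfCoprime x hcopL)
  have hval : ((ZMod.unitOfCoprime x hcopL : ZMod (Nat.lcm m 4))).val = x % Nat.lcm m 4 := by
    rw [ZMod.coe_unitOfCoprime, ZMod.val_natCast]
  rw [hval] at hs
  have hsx : ((s : ZMod n)).val ≡ x [MOD Nat.lcm m 4] :=
    hs.trans (Nat.mod_mod_of_dvd x (dvd_refl _) ▸ (Nat.mod_modEq x (Nat.lcm m 4)))
  refine ⟨s, ?_, ?_⟩
  · exact (Nat.ModEq.of_dvd (Nat.dvd_lcm_left m 4) hsx).trans hx1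
  · have h4' := (Nat.ModEq.of_dvd (Nat.dvd_lcm_right m 4) hsx).trans hx2
    unfold Nat.ModEq at h4'
    omega

lemma exists_unit_trans (hn : 0 < n) {d k k' : ℕ} (hd4 : 4 ∣ n / d) (hk0 : 0 < k)
    (hk'0 : 0 < k') (hgk : Nat.gcd k n = d) (hgk' : Nat.gcd k' n = d) :
    ∃ s : (ZMod n)ˣ, (s : ZMod n) * (k : ZMod n) = (k' : ZMod n) ∧
      ((s : ZMod n)).val * (k / d) ≡ (k' / d) [MOD 4] := by
  haveI : NeZero n := ⟨hn.ne'⟩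
  have hd0 : 0 < d := by rw [← hgk]; exact Nat.gcd_pos_of_pos_left _ hk0
  have hdn : d ∣ n := hgk ▸ Nat.gcd_dvd_right k n
  set m := n / d with hm
  have hmn : m ∣ n := Nat.div_dvd_of_dvd hdn
  have hm0 : 0 < m := Nat.div_pos (Nat.le_of_dvd hn hdn) hd0
  haveI : NeZero m := ⟨hm0.ne'⟩
  have hdk : d ∣ k := hgk ▸ Nat.gcd_dvd_left k n
  have hdk' : d ∣ k' := hgk' ▸ Nat.gcd_dvd_left k' n
  have hc : Nat.Coprime (k / d) m := by
    have := Nat.coprime_div_gcd_div_gcd (m := k) (n := n) (by rw [hgk]; exact hd0)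
    rwa [hgk] at this
  have hc' : Nat.Coprime (k' / d) m := by
    have := Nat.coprime_div_gcd_div_gcd (m := k') (n := n) (by rw [hgk']; exact hd0)
    rwa [hgk'] at this
  set u : (ZMod m)ˣ := ZMod.unitOfCoprime _ hc with hu
  set u' : (ZMod m)ˣ := ZMod.unitOfCoprime _ hc' with hu'
  obtain ⟨s, hs⟩ := unit_lift hn hmn (u' * u⁻¹)
  have key : ((s : ZMod n)).val * (k / d) ≡ (k' / d) [MOD m] := by
    have h1 : ((((s : ZMod n)).val : ℕ) : ZMod m) = ((u' * u⁻¹ : (ZMod m)ˣ) : ZMod m) := by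
      have := (ZMod.natCast_eq_natCast_iff _ _ _).mpr hs
      rw [this, ZMod.natCast_val, ZMod.cast_id]
    have h2 : ((((s : ZMod n)).val * (k / d) : ℕ) : ZMod m) = (((k' / d) : ℕ) : ZMod m) := by
      push_cast
      rw [h1]
      have hku : ((k / d : ℕ) : ZMod m) = (u : ZMod m) := (ZMod.coe_unitOfCoprime _ hc).symm
      have hku' : ((k' / d : ℕ) : ZMod m) = (u' : ZMod m) := (ZMod.coe_unitOfCoprime _ hc').symm
      rw [hku, hku']
      have h3 : (u' * u⁻¹) * u = u' := by rw [mul_assoc, inv_mul_cancel, mul_one]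
      exact_mod_cast congrArg (Units.val) h3
    exact (ZMod.natCast_eq_natCast_iff _ _ _).mp h2
  have hmodn : ((s : ZMod n)).val * k ≡ k' [MOD n] := by
    have h3 := Nat.ModEq.mul_left' d key
    rw [Nat.mul_div_cancel' hdn] at h3
    have e1 : d * (((s : ZMod n)).val * (k / d)) = ((s : ZMod n)).val * k := by
      rw [mul_comm d, mul_assoc, mul_comm (k/d) d, Nat.mul_div_cancel' hdk]
    have e2 : d * (k' / d) = k' := Nat.mul_div_cancel' hdk'
    rwa [e1, e2] at h3
  refine ⟨s, ?_, Nat.ModEq.of_dvd hd4 key⟩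
  have := (ZMod.natCast_eq_natCast_iff _ _ _).mpr hmodn
  push_cast at this
  rwa [ZMod.natCast_val, ZMod.cast_id] at this

-- gfun basics
lemma val_ne_zero_of_mem (hn : 0 < n) (hC : ∀ a ∈ C, 1 ≤ a ∧ a ≤ n - 1)
    {a : ZMod n} (h : a.val ∈ C) : a ≠ 0 := by
  haveI : NeZero n := ⟨hn.ne'⟩
  intro h0
  subst h0
  rw [ZMod.val_zero] at h
  have := (hC 0 h).1
  omega

lemma not_both (hn : 0 < n) (hC : ∀ a ∈ C, 1 ≤ a ∧ a ≤ n - 1)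
    (hskew : ∀ a ∈ C, n - a ∉ C) (a : ZMod n) : ¬(a.val ∈ C ∧ (-a).val ∈ C) := by
  haveI : NeZero n := ⟨hn.ne'⟩
  rintro ⟨h1, h2⟩
  have ha : a ≠ 0 := val_ne_zero_of_mem hn hC h1
  rw [ZMod.neg_val, if_neg ha] at h2
  exact hskew a.val h1 h2

lemma gfun_eq_one (hn : 0 < n) (hC : ∀ a ∈ C, 1 ≤ a ∧ a ≤ n - 1)
    (hskew : ∀ a ∈ C, n - a ∉ C) (a : ZMod n) : gfun n C a = 1 ↔ a.val ∈ C := by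
  by_cases h1 : a.val ∈ C
  · have h2 : (-a).val ∉ C := fun h2 => not_both hn hC hskew a ⟨h1, h2⟩
    simp [gfun, h1, h2]
  · by_cases h2 : (-a).val ∈ C <;> simp [gfun, h1, h2]

lemma gfun_eq_negone (hn : 0 < n) (hC : ∀ a ∈ C, 1 ≤ a ∧ a ≤ n - 1)
    (hskew : ∀ a ∈ C, n - a ∉ C) (a : ZMod n) : gfun n C a = -1 ↔ (-a).val ∈ C := by
  by_cases h2 : (-a).val ∈ C
  · have h1 : a.val ∉ C := fun h1 => not_both hn hC hskew a ⟨h1, h2⟩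
    simp [gfun, h1, h2]
  · by_cases h1 : a.val ∈ C <;> simp [gfun, h1, h2]

lemma gfun_neg (a : ZMod n) : gfun n C (-a) = - gfun n C a := by
  unfold gfun
  rw [neg_neg]
  ring

lemma unit_val_odd' (h4 : 4 ∣ n) (s : (ZMod n)ˣ) : ((s : ZMod n)).val % 2 = 1 := by
  have hcop := ZMod.val_coe_unit_coprime s
  rcases Nat.even_or_odd ((s : ZMod n)).val with he | ho
  · exfalso
    have h2 : (2:ℕ) ∣ Nat.gcd ((s : ZMod n)).val n :=
      Nat.dvd_gcd he.two_dvd (dvd_trans (by norm_num) h4)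
    rw [Nat.Coprime] at hcop
    rw [hcop] at h2
    norm_num at h2
  · rcases ho with ⟨t, ht⟩; omega

-- Forward : F1
lemma four_dvd_cofactor (hn : 0 < n) (h4 : 4 ∣ n) (hC : ∀ a ∈ C, 1 ≤ a ∧ a ≤ n - 1)
    (hskew : ∀ a ∈ C, n - a ∉ C)
    (hrel : ∀ (s : (ZMod n)ˣ) (a : ZMod n),
      gfun n C ((s : ZMod n) * a) = chi4 (((s : ZMod n)).val) * gfun n C a)
    {k : ℕ} (hk : k ∈ C) : 4 ∣ n / Nat.gcd k n := by
  haveI : NeZero n := ⟨hn.ne'⟩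
  set d := Nat.gcd k n with hd
  by_contra hnd
  have hk0 : 0 < k := (hC k hk).1
  have hkn : k < n := by have := (hC k hk).2; omega
  have hdn : d ∣ n := Nat.gcd_dvd_right k n
  have hdk : d ∣ k := Nat.gcd_dvd_left k n
  have hmn : n / d ∣ n := Nat.div_dvd_of_dvd hdn
  obtain ⟨s, hs1, hs3⟩ := exists_unit_one_three hn h4 hmn hnd
  have hsv1 : 1 ≤ ((s : ZMod n)).val := by omega
  have hsk : (s : ZMod n) * (k : ZMod n) = (k : ZMod n) := by
    have hdd : n / d ∣ ((s : ZMod n)).val - 1 := (Nat.modEq_iff_dvd' hsv1).mp hs1.symm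
    have hmul : n ∣ (((s : ZMod n)).val - 1) * k := by
      have h1 : d * (n / d) ∣ k * (((s : ZMod n)).val - 1) := Nat.mul_dvd_mul hdk hdd
      rw [Nat.mul_div_cancel' hdn] at h1
      rwa [mul_comm]
    have hme : ((s : ZMod n)).val * k ≡ k [MOD n] := by
      have hle : k ≤ ((s : ZMod n)).val * k := Nat.le_mul_of_pos_left k (by omega)
      refine ((Nat.modEq_iff_dvd' hle).mpr ?_).symm
      have : ((s : ZMod n)).val * k - k = (((s : ZMod n)).val - 1) * k := by
        rw [Nat.sub_mul, one_mul]
      rwa [this]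
    have := (ZMod.natCast_eq_natCast_iff _ _ _).mpr hme
    push_cast at this
    rwa [ZMod.natCast_val, ZMod.cast_id] at this
  have hgk : gfun n C ((k : ZMod n)) = 1 := by
    rw [gfun_eq_one hn hC hskew, ZMod.val_cast_of_lt hkn]
    exact hk
  have hchis : chi4 (((s : ZMod n)).val) = -1 := by
    unfold chi4
    rw [if_neg (by omega)]
  have := hrel s (k : ZMod n)
  rw [hsk, hgk, hchis] at this
  omega

lemma dvd_quarter (hn : 0 < n) {d : ℕ} (hdn : d ∣ n) (h4d : 4 ∣ n / d) : d ∣ n / 4 := by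
  obtain ⟨t, ht⟩ := h4d
  have h1 : n = 4 * (d * t) := by
    have := Nat.mul_div_cancel' hdn
    rw [← this, ht]
    ring
  refine ⟨t, ?_⟩
  rw [h1, Nat.mul_div_cancel_left _ (by norm_num)]

lemma four_mul_dvd (hn : 0 < n) (h4 : 4 ∣ n) {d : ℕ} (hd : d ∣ n / 4) : 4 * d ∣ n := by
  obtain ⟨t, ht⟩ := hd
  refine ⟨t, ?_⟩
  have h1 : n = 4 * (n / 4) := (Nat.mul_div_cancel' h4).symm
  rw [h1, ht]
  ring

lemma cofactor_four_dvd (hn : 0 < n) {d : ℕ} (hd0 : 0 < d) (h4d : 4 * d ∣ n) : 4 ∣ n / d := by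
  obtain ⟨t, ht⟩ := h4d
  refine ⟨t, ?_⟩
  rw [ht]
  rw [show 4 * d * t = d * (4 * t) by ring, Nat.mul_div_cancel_left _ hd0]

-- odd quotient
lemma quot_odd (hn : 0 < n) {k : ℕ} (hk0 : 0 < k) (h4d : 4 ∣ n / Nat.gcd k n) :
    (k / Nat.gcd k n) % 4 = 1 ∨ (k / Nat.gcd k n) % 4 = 3 := by
  set d := Nat.gcd k n with hd
  have hd0 : 0 < d := Nat.gcd_pos_of_pos_left _ hk0
  have hcop : Nat.Coprime (k / d) (n / d) := Nat.coprime_div_gcd_div_gcd hd0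
  have hodd : (k / d) % 2 = 1 := by
    rcases Nat.even_or_odd (k / d) with he | ho
    · exfalso
      have h2 : (2:ℕ) ∣ Nat.gcd (k / d) (n / d) :=
        Nat.dvd_gcd he.two_dvd (dvd_trans (by norm_num) h4d)
      rw [Nat.Coprime] at hcop
      rw [hcop] at h2
      norm_num at h2
    · rcases ho with ⟨t, ht⟩; omega
  omega

-- F3 : value of gfun on orbit elements
lemma gfun_orbit (hn : 0 < n) (h4 : 4 ∣ n) (hC : ∀ a ∈ C, 1 ≤ a ∧ a ≤ n - 1)
    (hskew : ∀ a ∈ C, n - a ∉ C)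
    (hrel : ∀ (s : (ZMod n)ˣ) (a : ZMod n),
      gfun n C ((s : ZMod n) * a) = chi4 (((s : ZMod n)).val) * gfun n C a)
    {k : ℕ} (hk : k ∈ C) {k' r' : ℕ} (hr' : r' = 1 ∨ r' = 3)
    (hk' : k' ∈ Grset n (Nat.gcd k n) r') :
    gfun n C ((k' : ZMod n)) = (if r' = (k / Nat.gcd k n) % 4 then 1 else -1) := by
  haveI : NeZero n := ⟨hn.ne'⟩
  set d := Nat.gcd k n with hd
  obtain ⟨hk'n, hdk', hk'r, hgk'⟩ := mem_Grset.mp hk'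
  have hk0 : 0 < k := (hC k hk).1
  have hkn : k < n := by have := (hC k hk).2; omega
  have hd4 : 4 ∣ n / d := four_dvd_cofactor hn h4 hC hskew hrel hk
  have hdn : d ∣ n := Nat.gcd_dvd_right k n
  have hdltn : d < n := by
    have h1 : d ≤ k := Nat.le_of_dvd hk0 (Nat.gcd_dvd_left k n)
    omega
  have hk'0 : 0 < k' := by
    rcases Nat.eq_zero_or_pos k' with h0 | h0
    · exfalso
      rw [h0] at hgk'
      simp at hgk'
      omega
    · exact h0
  obtain ⟨s, hsmul, hs4⟩ := exists_unit_trans hn hd4 hk0 hk'0 rfl hgk'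
  set r := (k / d) % 4 with hr
  have hrodd : r = 1 ∨ r = 3 := quot_odd hn hk0 hd4
  have hsodd := unit_val_odd' h4 s
  have hprod : (((s : ZMod n)).val % 4 * r) % 4 = r' := by
    have h1 : (((s : ZMod n)).val * (k / d)) % 4 = (k' / d) % 4 := hs4
    rw [Nat.mul_mod, ← hr] at h1
    rw [h1, hk'r]
  have hchi : chi4 (((s : ZMod n)).val) = (if r' = r then 1 else -1) := by
    have hsv : ((s : ZMod n)).val % 4 = 1 ∨ ((s : ZMod n)).val % 4 = 3 := by omega
    unfold chi4
    rcases hsv with h | h <;> rcases hrodd with h2 | h2 <;>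
      rw [h, h2] at hprod <;> norm_num at hprod <;> simp [h, h2, ← hprod] <;> omega
  have hgk : gfun n C ((k : ZMod n)) = 1 := by
    rw [gfun_eq_one hn hC hskew, ZMod.val_cast_of_lt hkn]
    exact hk
  have := hrel s (k : ZMod n)
  rw [hsmul, hgk, mul_one, hchi] at this
  exact this

lemma mem_C_iff_orbit (hn : 0 < n) (h4 : 4 ∣ n) (hC : ∀ a ∈ C, 1 ≤ a ∧ a ≤ n - 1)
    (hskew : ∀ a ∈ C, n - a ∉ C)
    (hrel : ∀ (s : (ZMod n)ˣ) (a : ZMod n),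
      gfun n C ((s : ZMod n) * a) = chi4 (((s : ZMod n)).val) * gfun n C a)
    {k : ℕ} (hk : k ∈ C) {k' r' : ℕ} (hr' : r' = 1 ∨ r' = 3)
    (hk' : k' ∈ Grset n (Nat.gcd k n) r') :
    (k' ∈ C ↔ r' = (k / Nat.gcd k n) % 4) := by
  haveI : NeZero n := ⟨hn.ne'⟩
  have hval := gfun_orbit hn h4 hC hskew hrel hk hr' hk'
  have hk'n : k' < n := (mem_Grset.mp hk').1
  have hmem : k' ∈ C ↔ gfun n C ((k' : ZMod n)) = 1 := by
    rw [gfun_eq_one hn hC hskew, ZMod.val_cast_of_lt hk'n]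
  rw [hmem, hval]
  by_cases h : r' = (k / Nat.gcd k n) % 4 <;> simp [h]

-- F4 : structure from relation
theorem structure_of_rel (hn : 0 < n) (h4 : 4 ∣ n) (hC : ∀ a ∈ C, 1 ≤ a ∧ a ≤ n - 1)
    (hskew : ∀ a ∈ C, n - a ∉ C)
    (hrel : ∀ (s : (ZMod n)ˣ) (a : ZMod n),
      gfun n C ((s : ZMod n) * a) = chi4 (((s : ZMod n)).val) * gfun n C a) :
    ∃ 𝒟 : Finset ℕ, 𝒟 ⊆ (n / 4).divisors ∧ ∃ S : ℕ → Finset ℕ,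
      (∀ d ∈ 𝒟, S d = Grset n d 1 ∨ S d = Grset n d 3) ∧ C = 𝒟.biUnion S := by
  classical
  have hn4 : 4 ≤ n := Nat.le_of_dvd hn h4
  have hq0 : n / 4 ≠ 0 := by omega
  refine ⟨C.image (fun k => Nat.gcd k n), ?_, ?_⟩
  · intro d hd
    obtain ⟨k, hk, rfl⟩ := Finset.mem_image.mp hd
    rw [Nat.mem_divisors]
    exact ⟨dvd_quarter hn (Nat.gcd_dvd_right k n) (four_dvd_cofactor hn h4 hC hskew hrel hk), hq0⟩
  · refine ⟨fun d => if ((Grset n d 1).filter (fun m => m ∈ C)).Nonempty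
      then Grset n d 1 else Grset n d 3, fun d _ => ?_, ?_⟩
    · dsimp only
      split
      · exact Or.inl rfl
      · exact Or.inr rfl
    · ext k
      simp only [Finset.mem_biUnion, Finset.mem_image]
      constructor
      · intro hk
        have hk0 : 0 < k := (hC k hk).1
        have hkn : k < n := by have := (hC k hk).2; omega
        set d := Nat.gcd k n with hd
        have hd4 := four_dvd_cofactor hn h4 hC hskew hrel hk
        set r := (k / d) % 4 with hr
        have hrodd : r = 1 ∨ r = 3 := quot_odd hn hk0 hd4
        have hkG : k ∈ Grset n d r := by
          rw [mem_Grset]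
          exact ⟨hkn, Nat.gcd_dvd_left k n, rfl, rfl⟩
        refine ⟨d, ⟨k, hk, rfl⟩, ?_⟩
        by_cases hne : ((Grset n d 1).filter (fun m => m ∈ C)).Nonempty
        · rw [if_pos hne]
          -- some element of Grset n d 1 is in C; show r = 1
          obtain ⟨k1, hk1⟩ := hne
          rw [Finset.mem_filter] at hk1
          obtain ⟨hk1G, hk1C⟩ := hk1
          have h1 : (1 : ℕ) = r :=
            (mem_C_iff_orbit hn h4 hC hskew hrel hk (Or.inl rfl) hk1G).mp hk1C
          rw [← h1] at hkG
          exact hkG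
        · rw [if_neg hne]
          -- r must be 3 : else k itself would witness nonemptiness
          rcases hrodd with h1 | h3
          · exfalso
            apply hne
            refine ⟨k, Finset.mem_filter.mpr ⟨?_, hk⟩⟩
            rwa [← h1]
          · exact h3 ▸ hkG
      · rintro ⟨d, ⟨k0, hk0C, rfl⟩, hkS⟩
        set d := Nat.gcd k0 n with hd
        have hk00 : 0 < k0 := (hC k0 hk0C).1
        set r0 := (k0 / d) % 4 with hr0
        have hd4 := four_dvd_cofactor hn h4 hC hskew hrel hk0C
        have hr0odd : r0 = 1 ∨ r0 = 3 := quot_odd hn hk00 hd4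
        by_cases hne : ((Grset n d 1).filter (fun m => m ∈ C)).Nonempty
        · rw [if_pos hne] at hkS
          obtain ⟨k1, hk1⟩ := hne
          rw [Finset.mem_filter] at hk1
          obtain ⟨hk1G, hk1C⟩ := hk1
          have h1 : (1 : ℕ) = r0 :=
            (mem_C_iff_orbit hn h4 hC hskew hrel hk0C (Or.inl rfl) hk1G).mp hk1C
          exact (mem_C_iff_orbit hn h4 hC hskew hrel hk0C (Or.inl rfl) hkS).mpr h1
        · rw [if_neg hne] at hkS
          have h3 : r0 = 3 := by
            rcases hr0odd with h1 | h3
            · exfalso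
              apply hne
              have hk0n : k0 < n := by have := (hC k0 hk0C).2; omega
              refine ⟨k0, Finset.mem_filter.mpr ⟨?_, hk0C⟩⟩
              rw [mem_Grset]
              exact ⟨hk0n, Nat.gcd_dvd_left k0 n, h1 ▸ rfl, rfl⟩
            · exact h3
          exact (mem_C_iff_orbit hn h4 hC hskew hrel hk0C (Or.inr rfl) hkS).mpr h3.symm

-- Backward direction helpers
lemma gcd_sub_eq {b : ℕ} (hb : b ≤ n) : Nat.gcd (n - b) n = Nat.gcd b n := by
  apply Nat.dvd_antisymm
  · apply Nat.dvd_gcd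
    · have h1 := Nat.gcd_dvd_left (n - b) n
      have h2 := Nat.gcd_dvd_right (n - b) n
      have h4 := Nat.dvd_sub h2 h1
      rwa [show n - (n - b) = b by omega] at h4
    · exact Nat.gcd_dvd_right _ _
  · apply Nat.dvd_gcd
    · exact Nat.dvd_sub (Nat.gcd_dvd_right b n) (Nat.gcd_dvd_left b n)
    · exact Nat.gcd_dvd_right _ _

lemma unit_smul_mem_Grset (hn : 0 < n) {d r : ℕ} (hd0 : 0 < d) (h4d : 4 * d ∣ n)
    (s : (ZMod n)ˣ) {k : ℕ} (hk : k ∈ Grset n d r) :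
    (((s : ZMod n)) * (k : ZMod n)).val ∈ Grset n d ((((s : ZMod n)).val * r) % 4) := by
  haveI : NeZero n := ⟨hn.ne'⟩
  obtain ⟨hkn, hdk, hkr, hgk⟩ := mem_Grset.mp hk
  set b := (((s : ZMod n)) * (k : ZMod n)).val with hbdef
  have hbn : b < n := ZMod.val_lt _
  have hgb : Nat.gcd b n = d := by
    have h1 := val_unit_mul_gcd hn s ((k : ZMod n))
    rw [ZMod.val_cast_of_lt hkn] at h1
    rw [← hgk]
    exact h1
  have hdb : d ∣ b := hgb ▸ Nat.gcd_dvd_left b n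
  have hmod : b ≡ ((s : ZMod n)).val * k [MOD n] := by
    rw [hbdef, ZMod.val_mul, ZMod.val_cast_of_lt hkn]
    exact (Nat.mod_modEq _ n)
  have hdsk : d ∣ ((s : ZMod n)).val * k := Dvd.dvd.mul_left hdk _
  have hdivmod : b / d ≡ (((s : ZMod n)).val * k) / d [MOD 4] :=
    div_modeq_four hd0 h4d hdb hdsk hmod
  have hquot : (((s : ZMod n)).val * k) / d = ((s : ZMod n)).val * (k / d) :=
    Nat.mul_div_assoc _ hdk
  have hfin : (b / d) % 4 = (((s : ZMod n)).val * r) % 4 := by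
    have h2 : b / d ≡ ((s : ZMod n)).val * (k / d) [MOD 4] := hquot ▸ hdivmod
    have h3 : ((s : ZMod n)).val * (k / d) ≡ ((s : ZMod n)).val * r [MOD 4] := by
      apply Nat.ModEq.mul_left
      unfold Nat.ModEq
      omega
    exact (h2.trans h3)
  rw [mem_Grset]
  exact ⟨hbn, hdb, hfin, hgb⟩

lemma neg_mem_Grset (hn : 0 < n) {d r b : ℕ} (hd0 : 0 < d) (h4d : 4 * d ∣ n)
    (hr : r = 1 ∨ r = 3) (hb : b ∈ Grset n d r) : (n - b) ∈ Grset n d (4 - r) := by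
  obtain ⟨hbn, hdb, hbr, hgb⟩ := mem_Grset.mp hb
  have hdn : d ∣ n := dvd_trans (dvd_mul_left d 4) h4d
  have hb0 : 0 < b := by
    rcases Nat.eq_zero_or_pos b with h0 | h0
    · exfalso
      rw [h0] at hgb
      simp at hgb
      -- d = n ; but 4*d ∣ n
      have := Nat.le_of_dvd hn h4d
      omega
    · exact h0
  obtain ⟨B, rfl⟩ := hdb
  obtain ⟨N, hN⟩ := hdn
  have hBN : B < N := by
    have : d * B < d * N := by rw [← hN]; exact hbn
    exact Nat.lt_of_mul_lt_mul_left this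
  have h4N : 4 ∣ N := by
    obtain ⟨t, ht⟩ := h4d
    rw [hN] at ht
    have : N = 4 * t := by
      have := Nat.eq_of_mul_eq_mul_left hd0 (by rw [ht]; ring : d * N = d * (4 * t))
      exact this
    exact ⟨t, this⟩
  have hsub : n - d * B = d * (N - B) := by
    rw [hN, ← Nat.mul_sub]
  rw [mem_Grset, hsub]
  refine ⟨?_, Dvd.intro _ rfl, ?_, ?_⟩
  · rw [← hsub]; omega
  · rw [Nat.mul_div_cancel_left _ hd0]
    rw [Nat.mul_div_cancel_left _ hd0] at hbr
    omega
  · rw [← hsub, gcd_sub_eq (by omega), hgb]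

end Comb

section Back
variable {n : ℕ} {C : Finset ℕ} {𝒟 : Finset ℕ} {S : ℕ → Finset ℕ}

lemma g_smul_eq (hn : 0 < n) (h4 : 4 ∣ n) (hC : ∀ a ∈ C, 1 ≤ a ∧ a ≤ n - 1)
    (hskew : ∀ a ∈ C, n - a ∉ C) (h𝒟 : 𝒟 ⊆ (n / 4).divisors)
    (hS : ∀ d ∈ 𝒟, S d = Grset n d 1 ∨ S d = Grset n d 3) (hCeq : C = 𝒟.biUnion S)
    (s : (ZMod n)ˣ) (a : ZMod n) (ha : a.val ∈ C) :
    gfun n C ((s : ZMod n) * a) = chi4 (((s : ZMod n)).val) := by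
  haveI : NeZero n := ⟨hn.ne'⟩
  have hmem := ha
  rw [hCeq, Finset.mem_biUnion] at hmem
  obtain ⟨d, hd𝒟, hdS⟩ := hmem
  obtain ⟨r, hr13, hSd⟩ : ∃ r, (r = 1 ∨ r = 3) ∧ S d = Grset n d r := by
    rcases hS d hd𝒟 with h | h
    · exact ⟨1, Or.inl rfl, h⟩
    · exact ⟨3, Or.inr rfl, h⟩
  rw [hSd] at hdS
  have hddiv := h𝒟 hd𝒟
  rw [Nat.mem_divisors] at hddiv
  obtain ⟨hdq, hq0⟩ := hddiv
  have hd0 : 0 < d := by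
    rcases Nat.eq_zero_or_pos d with h0 | h0
    · exfalso; rw [h0] at hdq; exact hq0 (Nat.eq_zero_of_zero_dvd hdq)
    · exact h0
  have h4d : 4 * d ∣ n := four_mul_dvd hn h4 hdq
  have hcast : ((a.val : ℕ) : ZMod n) = a := by
    rw [ZMod.natCast_val, ZMod.cast_id]
  have hb := unit_smul_mem_Grset hn hd0 h4d s hdS
  rw [hcast] at hb
  have hsodd := unit_val_odd' h4 s
  have hdlt : d < n := by
    have h1 : n / 4 < n := by have := Nat.le_of_dvd hn h4; omega
    have h2 : d ≤ n / 4 := Nat.le_of_dvd (by omega) hdq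
    omega
  have hbne : ((s : ZMod n)) * a ≠ 0 := by
    intro h0
    rw [h0] at hb
    rw [ZMod.val_zero] at hb
    have := (mem_Grset.mp hb).2.2.2
    simp at this
    omega
  rcases Nat.even_or_odd (((s : ZMod n)).val) with he | ho
  · exfalso; rcases he with ⟨t, ht⟩; omega
  have hsv4 : (((s : ZMod n)).val) % 4 = 1 ∨ (((s : ZMod n)).val) % 4 = 3 := by
    rcases ho with ⟨t, ht⟩; omega
  rcases hsv4 with hsv | hsv
  · -- chi = 1 ; (s*a).val lands in Grset n d r which is inside C
    have hrr : ((((s : ZMod n)).val * r) % 4) = r := by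
      rw [Nat.mul_mod]
      rcases hr13 with h | h <;> rw [h] <;> omega
    rw [hrr] at hb
    have hmemC : ((s : ZMod n) * a).val ∈ C := by
      rw [hCeq, Finset.mem_biUnion]
      exact ⟨d, hd𝒟, hSd ▸ hb⟩
    rw [(gfun_eq_one hn hC hskew _).mpr hmemC]
    unfold chi4
    rw [if_pos hsv]
  · -- chi = -1 ; -(s*a) lands in C
    have hrr : ((((s : ZMod n)).val * r) % 4) = 4 - r := by
      rw [Nat.mul_mod]
      rcases hr13 with h | h <;> rw [h] <;> omega
    rw [hrr] at hb
    have hneg := neg_mem_Grset hn hd0 h4d (by omega) hb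
    have h44 : 4 - (4 - r) = r := by omega
    rw [h44] at hneg
    have hnegval : (-((s : ZMod n) * a)).val = n - ((s : ZMod n) * a).val := by
      rw [ZMod.neg_val, if_neg hbne]
    have hmemC : (-((s : ZMod n) * a)).val ∈ C := by
      rw [hnegval, hCeq, Finset.mem_biUnion]
      exact ⟨d, hd𝒟, hSd ▸ hneg⟩
    rw [(gfun_eq_negone hn hC hskew _).mpr hmemC]
    unfold chi4
    rw [if_neg (by omega)]

lemma chi4_cases (m : ℕ) : chi4 m = 1 ∨ chi4 m = -1 := by
  unfold chi4; split
  · exact Or.inl rfl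
  · exact Or.inr rfl

theorem rel_of_structure (hn : 0 < n) (h4 : 4 ∣ n) (hC : ∀ a ∈ C, 1 ≤ a ∧ a ≤ n - 1)
    (hskew : ∀ a ∈ C, n - a ∉ C) (h𝒟 : 𝒟 ⊆ (n / 4).divisors)
    (hS : ∀ d ∈ 𝒟, S d = Grset n d 1 ∨ S d = Grset n d 3) (hCeq : C = 𝒟.biUnion S) :
    ∀ (s : (ZMod n)ˣ) (a : ZMod n),
      gfun n C ((s : ZMod n) * a) = chi4 (((s : ZMod n)).val) * gfun n C a := by
  haveI : NeZero n := ⟨hn.ne'⟩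
  intro s a
  by_cases h1 : a.val ∈ C
  · rw [g_smul_eq hn h4 hC hskew h𝒟 hS hCeq s a h1, (gfun_eq_one hn hC hskew a).mpr h1,
      mul_one]
  · by_cases h2 : (-a).val ∈ C
    · have h3 := g_smul_eq hn h4 hC hskew h𝒟 hS hCeq s (-a) h2
      rw [mul_neg, gfun_neg] at h3
      rw [(gfun_eq_negone hn hC hskew a).mpr h2]
      omega
    · have ha0 : gfun n C a = 0 := by simp [gfun, h1, h2]
      have hb0 : gfun n C ((s : ZMod n) * a) = 0 := by
        by_cases hb1 : ((s : ZMod n) * a).val ∈ C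
        · exfalso
          have h3 := g_smul_eq hn h4 hC hskew h𝒟 hS hCeq s⁻¹ _ hb1
          have he : ((s⁻¹ : (ZMod n)ˣ) : ZMod n) * ((s : ZMod n) * a) = a := by
            rw [← mul_assoc, ← Units.val_mul, inv_mul_cancel, Units.val_one, one_mul]
          rw [he, ha0] at h3
          rcases chi4_cases (((s⁻¹ : (ZMod n)ˣ) : ZMod n)).val with h | h <;> omega
        · by_cases hb2 : (-((s : ZMod n) * a)).val ∈ C
          · exfalso
            have h3 := g_smul_eq hn h4 hC hskew h𝒟 hS hCeq s⁻¹ _ hb2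
            have he : ((s⁻¹ : (ZMod n)ˣ) : ZMod n) * (-((s : ZMod n) * a)) = -a := by
              rw [mul_neg, ← mul_assoc, ← Units.val_mul, inv_mul_cancel, Units.val_one,
                one_mul]
            rw [he, gfun_neg, ha0] at h3
            rcases chi4_cases (((s⁻¹ : (ZMod n)ˣ) : ZMod n)).val with h | h <;> omega
          · simp [gfun, hb1, hb2]
      rw [ha0, hb0, mul_zero]

theorem comb_equiv (hn : 0 < n) (h4 : 4 ∣ n) (hC : ∀ a ∈ C, 1 ≤ a ∧ a ≤ n - 1)
    (hskew : ∀ a ∈ C, n - a ∉ C) :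
    (∀ (s : (ZMod n)ˣ) (a : ZMod n),
      gfun n C ((s : ZMod n) * a) = chi4 (((s : ZMod n)).val) * gfun n C a) ↔
    (∃ 𝒟 : Finset ℕ, 𝒟 ⊆ (n / 4).divisors ∧ ∃ S : ℕ → Finset ℕ,
      (∀ d ∈ 𝒟, S d = Grset n d 1 ∨ S d = Grset n d 3) ∧ C = 𝒟.biUnion S) := by
  constructor
  · exact structure_of_rel hn h4 hC hskew
  · rintro ⟨𝒟, h𝒟, S, hS, hCeq⟩
    exact rel_of_structure hn h4 hC hskew h𝒟 hS hCeq

end Back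


section Glue

lemma exp_pi_div_two : Complex.exp ((Real.pi : ℂ)/2 * Complex.I) = Complex.I := by
  rw [Complex.exp_mul_I]
  have h1 : ((Real.pi : ℂ)/2 : ℂ) = ((Real.pi/2 : ℝ) : ℂ) := by push_cast; ring
  rw [h1, ← Complex.ofReal_cos, ← Complex.ofReal_sin, Real.cos_pi_div_two, Real.sin_pi_div_two]
  simp

lemma omega_pow_I (n : ℕ) (hn : 0 < n) (h4 : 4 ∣ n) :
    (Complex.exp (2 * Real.pi * Complex.I / n)) ^ (n/4) = Complex.I := by
  rw [← Complex.exp_nat_mul]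
  have hn0 : (n:ℂ) ≠ 0 := Nat.cast_ne_zero.mpr hn.ne'
  have hc : ((n/4 : ℕ) : ℂ) = (n:ℂ)/4 := Nat.cast_div h4 (by norm_num)
  rw [hc]
  have harg : (n:ℂ)/4 * (2 * Real.pi * Complex.I / n) = (Real.pi : ℂ)/2 * Complex.I := by
    field_simp
    ring
  rw [harg, exp_pi_div_two]

lemma sum_indicator_eq (n : ℕ) [NeZero n] {C : Finset ℕ}
    (hC : ∀ a ∈ C, a < n) (f : ZMod n → ℂ) :
    ∑ a : ZMod n, (if a.val ∈ C then f a else 0) = ∑ k ∈ C, f ((k : ZMod n)) := by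
  rw [← Finset.sum_filter]
  refine Finset.sum_nbij' (fun a => a.val) (fun k => (k : ZMod n)) ?_ ?_ ?_ ?_ ?_
  · intro a ha
    exact (Finset.mem_filter.mp ha).2
  · intro k hk
    refine Finset.mem_filter.mpr ⟨Finset.mem_univ _, ?_⟩
    rwa [ZMod.val_cast_of_lt (hC k hk)]
  · intro a _
    simp [ZMod.natCast_val, ZMod.cast_id]
  · intro k hk
    exact ZMod.val_cast_of_lt (hC k hk)
  · intro a _
    simp [ZMod.natCast_val, ZMod.cast_id]

lemma bridge_sum (n : ℕ) [NeZero n] (hn : 0 < n) (C : Finset ℕ)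
    (hC : ∀ a ∈ C, 1 ≤ a ∧ a ≤ n - 1) (j : ℕ) :
    Wsum (Complex.exp (2 * Real.pi * Complex.I / n)) (gfun n C) ((j : ZMod n))
      = ∑ k ∈ C, ((Complex.exp (2 * Real.pi * Complex.I / n)) ^ (j * k) -
         (Complex.exp (2 * Real.pi * Complex.I / n))⁻¹ ^ (j * k)) := by
  set ω : ℂ := Complex.exp (2 * Real.pi * Complex.I / n) with hωdef
  have hω : IsPrimitiveRoot ω n := Complex.isPrimitiveRoot_exp n hn.ne'
  have hClt : ∀ a ∈ C, a < n := fun a ha => by have := (hC a ha).2; omega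
  have hsplit : ∀ a : ZMod n, ((gfun n C a : ℤ) : ℂ) * ω ^ (((j : ZMod n)) * a).val
      = (if a.val ∈ C then ω ^ (((j : ZMod n)) * a).val else 0)
        - (if (-a).val ∈ C then ω ^ (((j : ZMod n)) * a).val else 0) := by
    intro a
    unfold gfun
    by_cases h1 : a.val ∈ C <;> by_cases h2 : (-a).val ∈ C <;> simp [h1, h2]
  have hW : Wsum ω (gfun n C) ((j : ZMod n))
      = (∑ a : ZMod n, if a.val ∈ C then ω ^ (((j : ZMod n)) * a).val else 0)
        - (∑ a : ZMod n, if (-a).val ∈ C then ω ^ (((j : ZMod n)) * a).val else 0) := by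
    unfold Wsum
    rw [← Finset.sum_sub_distrib]
    exact Finset.sum_congr rfl (fun a _ => hsplit a)
  have hS1 : (∑ a : ZMod n, if a.val ∈ C then ω ^ (((j : ZMod n)) * a).val else 0)
      = ∑ k ∈ C, ω ^ (j * k) := by
    rw [sum_indicator_eq n hClt]
    refine Finset.sum_congr rfl (fun k _ => ?_)
    have h1 : ((j : ZMod n)) * ((k : ZMod n)) = ((j * k : ℕ) : ZMod n) := by push_cast; ring
    rw [h1, pow_val_natCast hω]
  have hS2 : (∑ a : ZMod n, if (-a).val ∈ C then ω ^ (((j : ZMod n)) * a).val else 0)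
      = ∑ k ∈ C, (ω⁻¹) ^ (j * k) := by
    have hre : (∑ a : ZMod n, if (-a).val ∈ C then ω ^ (((j : ZMod n)) * a).val else 0)
        = ∑ a : ZMod n, if a.val ∈ C then ω ^ (((j : ZMod n)) * (-a)).val else 0 := by
      refine Fintype.sum_equiv (Equiv.neg (ZMod n)) _ _ (fun a => ?_)
      simp only [Equiv.neg_apply, neg_neg]
    rw [hre, sum_indicator_eq n hClt]
    refine Finset.sum_congr rfl (fun k _ => ?_)
    have hmul : ω ^ (((j : ZMod n)) * (-((k : ZMod n)))).val
        * ω ^ (((j : ZMod n)) * ((k : ZMod n))).val = 1 := by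
      rw [pow_val_mul hω]
      rw [show ((j : ZMod n)) * (-((k : ZMod n))) + ((j : ZMod n)) * ((k : ZMod n))
        = (0 : ZMod n) by ring]
      rw [ZMod.val_zero, pow_zero]
    have h1 : ((j : ZMod n)) * ((k : ZMod n)) = ((j * k : ℕ) : ZMod n) := by push_cast; ring
    rw [h1, pow_val_natCast hω] at hmul
    rw [eq_inv_of_mul_eq_one_left hmul, inv_pow]
  rw [hW, hS1, hS2]
  rw [← Finset.sum_sub_distrib]

open Polynomial in
lemma K_transfer (N : ℕ+) (h4 : 4 ∣ (N:ℕ)) (g : ZMod (N:ℕ) → ℤ) :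
    (∀ j : ZMod (N:ℕ), ∃ z : ℤ,
        (Complex.exp (2 * Real.pi * Complex.I / (N:ℕ))) ^ ((N:ℕ)/4) *
          Wsum (Complex.exp (2 * Real.pi * Complex.I / (N:ℕ))) g j = (z:ℂ)) ↔
    (∀ (s : (ZMod (N:ℕ))ˣ) (a : ZMod (N:ℕ)),
      g ((s : ZMod (N:ℕ)) * a) = chi4 (((s : ZMod (N:ℕ))).val) * g a) := by
  haveI : NeZero (N:ℕ) := ⟨N.pos.ne'⟩
  set ω : ℂ := Complex.exp (2 * Real.pi * Complex.I / (N:ℕ)) with hωdef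
  have hω : IsPrimitiveRoot ω (N:ℕ) := Complex.isPrimitiveRoot_exp _ N.pos.ne'
  haveI : IsCyclotomicExtension {(N:ℕ)} ℚ (CyclotomicField N ℚ) :=
    CyclotomicField.isCyclotomicExtension N ℚ
  set ζK := IsCyclotomicExtension.zeta N ℚ (CyclotomicField N ℚ) with hζdef
  have hζK : IsPrimitiveRoot ζK (N:ℕ) := IsCyclotomicExtension.zeta_spec N ℚ _
  have hmin : minpoly ℚ ζK = cyclotomic (N:ℕ) ℚ := (cyclotomic_eq_minpoly_rat hζK N.pos).symm
  have haev : (Polynomial.aeval ω) (minpoly ℚ ζK) = 0 := by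
    rw [hmin, Polynomial.aeval_def, ← Polynomial.eval_map, Polynomial.map_cyclotomic]
    exact hω.isRoot_cyclotomic N.pos
  set pb := hζK.powerBasis ℚ with hpb
  have hgen : pb.gen = ζK := hζK.powerBasis_gen ℚ
  set φ : CyclotomicField N ℚ →ₐ[ℚ] ℂ := pb.lift ω (by rw [hgen]; exact haev) with hφdef
  have hφ : φ ζK = ω := by rw [← hgen]; exact pb.lift_gen ω _
  have hmap : ∀ j, φ (ζK ^ ((N:ℕ)/4) * Wsum ζK g j) = ω ^ ((N:ℕ)/4) * Wsum ω g j := by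
    intro j
    unfold Wsum
    rw [map_mul, map_pow, hφ, map_sum]
    congr 1
    refine Finset.sum_congr rfl (fun a _ => ?_)
    rw [map_mul, map_intCast, map_pow, hφ]
  have hinj : Function.Injective φ := RingHom.injective (φ : CyclotomicField N ℚ →+* ℂ)
  have hiff : ∀ j, ((∃ z : ℤ, ω ^ ((N:ℕ)/4) * Wsum ω g j = (z:ℂ)) ↔
      (∃ z : ℤ, ζK ^ ((N:ℕ)/4) * Wsum ζK g j = (z : CyclotomicField N ℚ))) := by
    intro j
    constructor
    · rintro ⟨z, hz⟩
      refine ⟨z, hinj ?_⟩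
      rw [hmap j, map_intCast, hz]
    · rintro ⟨z, hz⟩
      exact ⟨z, by rw [← hmap j, hz, map_intCast]⟩
  have h1 := forall_congr' hiff
  exact h1.trans (core_equiv h4 hζK g)

end Glue


theorem stmt16 (n : ℕ) (hn : 0 < n) (h4 : n % 4 = 0) (C : Finset ℕ)
    (hC : ∀ a ∈ C, 1 ≤ a ∧ a ≤ n - 1) (hskew : ∀ a ∈ C, n - a ∉ C) :
    (∀ j : ℕ, ∃ z : ℤ,
      Complex.I * ∑ k ∈ C,
        ((Complex.exp (2 * Real.pi * Complex.I / n)) ^ (j * k) -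
         (Complex.exp (2 * Real.pi * Complex.I / n))⁻¹ ^ (j * k)) = (z : ℂ)) ↔
    (∃ 𝒟 : Finset ℕ, 𝒟 ⊆ (n / 4).divisors ∧ ∃ S : ℕ → Finset ℕ,
      (∀ d ∈ 𝒟, S d = Grset n d 1 ∨ S d = Grset n d 3) ∧ C = 𝒟.biUnion S) := by
  have h4' : (4:ℕ) ∣ n := Nat.dvd_of_mod_eq_zero h4
  haveI : NeZero n := ⟨hn.ne'⟩
  have hbr : ∀ j : ℕ,
      Complex.I * ∑ k ∈ C,
        ((Complex.exp (2 * Real.pi * Complex.I / n)) ^ (j * k) -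
         (Complex.exp (2 * Real.pi * Complex.I / n))⁻¹ ^ (j * k))
      = (Complex.exp (2 * Real.pi * Complex.I / n)) ^ (n/4) *
          Wsum (Complex.exp (2 * Real.pi * Complex.I / n)) (gfun n C) ((j : ZMod n)) := by
    intro j
    rw [omega_pow_I n hn h4', bridge_sum n hn C hC j]
  have step1 : (∀ j : ℕ, ∃ z : ℤ,
      Complex.I * ∑ k ∈ C,
        ((Complex.exp (2 * Real.pi * Complex.I / n)) ^ (j * k) -
         (Complex.exp (2 * Real.pi * Complex.I / n))⁻¹ ^ (j * k)) = (z : ℂ))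
      ↔ (∀ j : ZMod n, ∃ z : ℤ,
        (Complex.exp (2 * Real.pi * Complex.I / n)) ^ (n/4) *
          Wsum (Complex.exp (2 * Real.pi * Complex.I / n)) (gfun n C) j = (z:ℂ)) := by
    constructor
    · intro h j
      obtain ⟨z, hz⟩ := h j.val
      refine ⟨z, ?_⟩
      rw [hbr j.val] at hz
      rwa [ZMod.natCast_val, ZMod.cast_id] at hz
    · intro h j
      obtain ⟨z, hz⟩ := h ((j : ZMod n))
      exact ⟨z, by rw [hbr j]; exact hz⟩
  have step2 := K_transfer ⟨n, hn⟩ h4' (gfun n C)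
  have step3 := comb_equiv (C := C) hn h4' hC hskew
  exact step1.trans (step2.trans step3)

end NT16
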